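/- An element a of a locally C*-algebra A is local positive (i.e., a = b*b + c with p_λ(c) = 0 for some b, c ∈ A and some λ) if and only if there exists λ ∈ Λ such that the image π_λ(a) of a in the quotient C*-algebra A_λ = A/ker(p_λ) is a positive element of A_λ. -/

import Mathlib

/-- An element `a` of a locally C*-algebra `A` is local positive
(`a = star b * b + c` with `p l c = 0` for some `b, c` and some `l`) iff there
is `l` such that the image `π l a` in the quotient C*-algebra `A_l = A/ker (p l)`
is a positive element of `A_l`.  The quotient C*-algebras are given as a family
`Aq l` of C*-algebras together with surjective *-homomorphisms `π l` satisfying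
`‖π l a‖ = p l a` (so that `ker (π l) = ker (p l)`). -/
theorem stmt3 {A : Type*} [Ring A] [Algebra ℂ A] [StarRing A] [StarModule ℂ A]
    {Λ : Type*} [Nonempty Λ]
    (p : SeminormFamily ℂ A Λ)
    (hdir : ∀ l1 l2 : Λ, ∃ l3 : Λ, (∀ a, p l1 a ≤ p l3 a) ∧ ∀ a, p l2 a ≤ p l3 a)
    (hmul : ∀ (l : Λ) (a b : A), p l (a * b) ≤ p l a * p l b)
    (hstar : ∀ (l : Λ) (a : A), p l (star a) = p l a)
    (hCstar : ∀ (l : Λ) (a : A), p l (star a * a) = p l a ^ 2)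
    (Aq : Λ → Type*)
    [∀ l, NormedRing (Aq l)] [∀ l, StarRing (Aq l)] [∀ l, CStarRing (Aq l)]
    [∀ l, NormedAlgebra ℂ (Aq l)] [∀ l, CompleteSpace (Aq l)]
    [∀ l, StarModule ℂ (Aq l)] [∀ l, PartialOrder (Aq l)]
    [∀ l, StarOrderedRing (Aq l)]
    (π : ∀ l, A →⋆ₐ[ℂ] Aq l)
    (hsurj : ∀ l, Function.Surjective (π l))
    (hnorm : ∀ (l : Λ) (a : A), ‖π l a‖ = p l a)
    (a : A) :
    (∃ (l : Λ) (b c : A), a = star b * b + c ∧ p l c = 0) ↔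
      ∃ l : Λ, 0 ≤ π l a := by
  constructor
  · rintro ⟨l, b, c, rfl, hc⟩
    refine ⟨l, ?_⟩
    have hc0 : π l c = 0 := by rw [← norm_eq_zero, hnorm]; exact hc
    rw [map_add, map_mul, map_star, hc0, add_zero]
    exact star_mul_self_nonneg _
  · rintro ⟨l, hl⟩
    letI : CStarAlgebra (Aq l) := { }
    obtain ⟨b, hb⟩ := hsurj l (CFC.sqrt (π l a))
    refine ⟨l, b, a - star b * b, by abel, ?_⟩
    rw [← hnorm, norm_eq_zero]
    have hsa : IsSelfAdjoint (CFC.sqrt (π l a)) := IsSelfAdjoint.of_nonneg (CFC.sqrt_nonneg _)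
    simp [map_sub, map_mul, map_star, hb, hsa.star_eq, CFC.sqrt_mul_sqrt_self _ hl]
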